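/- If A is a bounded abelian group (that is, nA = 0 for some positive integer n), then the Jacobson radical of End(A) is a nilpotent ideal. -/

import Mathlib

open Ideal

namespace JNB

/-- In any ring, an element of the Jacobson radical gives a left-invertible `1 - g*f`. -/
lemma jac_left_inv {R : Type*} [Ring R] {f : R}
    (hf : f ∈ (⊥ : Ideal R).jacobson) (g : R) :
    ∃ u : R, u * (1 - g * f) = 1 := by
  obtain ⟨z, hz⟩ := Ideal.mem_jacobson_iff.mp hf (-g)
  rw [Ideal.mem_bot] at hz
  refine ⟨z, ?_⟩
  have h1 : z * (1 - g * f) = z * -g * f + z := by noncomm_ring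
  rw [h1]
  exact sub_eq_zero.mp hz

/-- If `f` is in the Jacobson radical of `End A` and `g (f b) = b`, then `b = 0`. -/
lemma eq_zero_of_fixed {A : Type*} [AddCommGroup A] {f : AddMonoid.End A}
    (hf : f ∈ (⊥ : Ideal (AddMonoid.End A)).jacobson) (g : AddMonoid.End A)
    {b : A} (hb : g (f b) = b) : b = 0 := by
  obtain ⟨u, hu⟩ := jac_left_inv hf g
  have h0 : (1 - g * f) b = 0 := by
    have h : (1 - g * f) b = b - g (f b) := rfl
    rw [h, hb, sub_self]
  have h1 : (u * (1 - g * f)) b = u ((1 - g * f) b) := rfl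
  have h2 : (u * (1 - g * f)) b = b := by rw [hu]; rfl
  rw [h1, h0, map_zero] at h2
  exact h2.symm

/-- `ZMod m` is self-injective (Baer's criterion). -/
lemma zmod_baer (m : ℕ) [NeZero m] : Module.Baer (ZMod m) (ZMod m) := by
  haveI : IsPrincipalIdealRing (ZMod m) :=
    IsPrincipalIdealRing.of_surjective (Int.castRingHom (ZMod m)) ZMod.intCast_surjective
  intro I g
  obtain ⟨d, rfl⟩ := (IsPrincipalIdealRing.principal I).principal
  have hdmem : d ∈ Ideal.span {d} := Ideal.subset_span rfl
  set z := g ⟨d, hdmem⟩ with hzdef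
  have key : ∃ w : ZMod m, w * d = z := by
    set G := Nat.gcd m (ZMod.val d) with hG
    have hm0 : m ≠ 0 := NeZero.ne m
    have hG0 : 0 < G := Nat.gcd_pos_of_pos_left _ (Nat.pos_of_ne_zero hm0)
    have hGm : G ∣ m := Nat.gcd_dvd_left _ _
    have hGd : G ∣ ZMod.val d := Nat.gcd_dvd_right _ _
    set k := m / G with hk
    have hk0 : 0 < k := Nat.div_pos (Nat.le_of_dvd (Nat.pos_of_ne_zero hm0) hGm) hG0
    have hGk : G * k = m := Nat.mul_div_cancel' hGm
    have hkd : (k : ZMod m) * d = 0 := by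
      have hdvd : m ∣ k * ZMod.val d := by
        obtain ⟨t, ht⟩ := hGd
        exact ⟨t, by rw [ht, ← hGk]; ring⟩
      have h0 : ((k * ZMod.val d : ℕ) : ZMod m) = 0 :=
        (ZMod.natCast_eq_zero_iff _ _).mpr hdvd
      rwa [Nat.cast_mul, ZMod.natCast_val, ZMod.cast_id] at h0
    have hsub : ((k : ZMod m) • (⟨d, hdmem⟩ : Ideal.span {d})) = 0 :=
      Subtype.ext (by simpa [smul_eq_mul] using hkd)
    have hkz : (k : ZMod m) * z = 0 := by
      rw [hzdef, ← smul_eq_mul, ← map_smul, hsub, map_zero]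
    have hGz : G ∣ ZMod.val z := by
      have hdvd2 : m ∣ k * ZMod.val z := by
        have h : ((k * ZMod.val z : ℕ) : ZMod m) = 0 := by
          rw [Nat.cast_mul, ZMod.natCast_val, ZMod.cast_id, hkz]
        exact (ZMod.natCast_eq_zero_iff _ _).mp h
      obtain ⟨t, ht⟩ := hdvd2
      refine ⟨t, ?_⟩
      have h : k * ZMod.val z = k * (G * t) := by rw [ht, ← hGk]; ring
      exact Nat.eq_of_mul_eq_mul_left hk0 h
    obtain ⟨t, ht⟩ := hGz
    refine ⟨(t : ZMod m) * (Nat.gcdB m (ZMod.val d) : ZMod m), ?_⟩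
    have hbez : (G : ℤ) = m * Nat.gcdA m (ZMod.val d) + ZMod.val d * Nat.gcdB m (ZMod.val d) :=
      Nat.gcd_eq_gcd_ab m (ZMod.val d)
    have hGcast : (G : ZMod m) = d * (Nat.gcdB m (ZMod.val d) : ZMod m) := by
      have h2 := congrArg (fun x : ℤ => (x : ZMod m)) hbez
      push_cast [ZMod.natCast_val, ZMod.cast_id, ZMod.natCast_self] at h2
      simpa using h2
    have hzt : z = ((G * t : ℕ) : ZMod m) := by
      rw [← ht, ZMod.natCast_val, ZMod.cast_id]
    rw [hzt]; push_cast [hGcast]; ring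
  obtain ⟨w, hw⟩ := key
  refine ⟨LinearMap.toSpanSingleton (ZMod m) (ZMod m) w, fun x hx => ?_⟩
  obtain ⟨r, hr⟩ := Ideal.mem_span_singleton'.mp hx
  have hxd : (⟨x, hx⟩ : Ideal.span {d}) = r • ⟨d, hdmem⟩ :=
    Subtype.ext (by simp [smul_eq_mul, hr])
  rw [hxd, map_smul, LinearMap.toSpanSingleton_apply, ← hzdef, smul_eq_mul, smul_eq_mul, ← hw,
    ← hr]
  ring

/-- Extension of characters into `ZMod m` from `m`-torsion abelian groups. -/
lemma exists_zmod_hom {M : Type*} [AddCommGroup M] (m : ℕ) [NeZero m]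
    [Module (ZMod m) M] (c : M) (hc : ∀ d : ℕ, d • c = 0 → m ∣ d) :
    ∃ π : M →+ ZMod m, π c = 1 := by
  have hinj : Function.Injective (LinearMap.toSpanSingleton (ZMod m) M c) := by
    intro r s hrs
    have h0 : (r - s) • c = 0 := by
      rw [sub_smul]
      have h : r • c = s • c := by
        simpa [LinearMap.toSpanSingleton_apply] using hrs
      rw [h, sub_self]
    have h1 : (ZMod.val (r - s)) • c = 0 := by
      rw [← Nat.cast_smul_eq_nsmul (ZMod m)]
      simpa [ZMod.natCast_val, ZMod.cast_id] using h0
    have h2 : ZMod.val (r - s) = 0 :=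
      Nat.eq_zero_of_dvd_of_lt (hc _ h1) (ZMod.val_lt _)
    exact sub_eq_zero.mp ((ZMod.val_eq_zero _).mp h2)
  obtain ⟨h, hh⟩ := (zmod_baer m).extension_property
    (LinearMap.toSpanSingleton (ZMod m) M c) hinj LinearMap.id
  refine ⟨h.toAddMonoidHom, ?_⟩
  have := DFunLike.congr_fun hh 1
  simpa [LinearMap.toSpanSingleton_apply] using this

section Cells

variable {A : Type*} [AddCommGroup A]

/-- The subgroup `p^i • A[p^(i+j)]`. -/
def cell (A : Type*) [AddCommGroup A] (p i j : ℕ) : AddSubgroup A where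
  carrier := {x | ∃ b : A, p ^ i • b = x ∧ p ^ (i + j) • b = 0}
  zero_mem' := ⟨0, smul_zero _, smul_zero _⟩
  add_mem' := by
    rintro x y ⟨b, rfl, hb⟩ ⟨b', rfl, hb'⟩
    exact ⟨b + b', by rw [smul_add], by rw [smul_add, hb, hb', add_zero]⟩
  neg_mem' := by
    rintro x ⟨b, rfl, hb⟩
    exact ⟨-b, by rw [smul_neg], by rw [smul_neg, hb, neg_zero]⟩

lemma gcd_smul_zero {M : Type*} [AddCommGroup M] {a b : ℕ} {x : M}
    (ha : a • x = 0) (hb : b • x = 0) : Nat.gcd a b • x = 0 := by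
  have h := Nat.gcd_eq_gcd_ab a b
  have h2 : ((Nat.gcd a b : ℕ) : ℤ) • x = 0 := by
    rw [h, add_smul, mul_comm (a : ℤ), mul_comm (b : ℤ), mul_smul, mul_smul,
      natCast_zsmul, natCast_zsmul, ha, hb, smul_zero, smul_zero, add_zero]
  rwa [natCast_zsmul] at h2

variable {n p E : ℕ}

lemma tors (hn : n ≠ 0) (hbound : ∀ a : A, n • a = 0) (hp : p.Prime)
    (hpE' : ¬ p ^ (E + 1) ∣ n) {t : ℕ} {b : A} (hb : p ^ t • b = 0) :
    p ^ (min t E) • b = 0 := by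
  have hdb : Nat.gcd (p ^ t) n • b = 0 := gcd_smul_zero hb (hbound b)
  obtain ⟨s, hst, hgs⟩ := (Nat.dvd_prime_pow hp).mp (Nat.gcd_dvd_left (p ^ t) n)
  have hsE : s ≤ E := by
    by_contra hcon
    push_neg at hcon
    exact hpE' (dvd_trans (pow_dvd_pow p hcon) (hgs ▸ Nat.gcd_dvd_right (p ^ t) n))
  rw [hgs] at hdb
  rw [show min t E = (min t E - s) + s by omega, pow_add, mul_smul, hdb, smul_zero]

lemma keystep (hn : n ≠ 0) (hbound : ∀ a : A, n • a = 0) (hp : p.Prime) (hE : 1 ≤ E)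
    (hpE : p ^ E ∣ n) (hpE' : ¬ p ^ (E + 1) ∣ n) {f : AddMonoid.End A}
    (hf : f ∈ (⊥ : Ideal (AddMonoid.End A)).jacobson) (i j : ℕ) {x : A}
    (hx : x ∈ cell A p i (j + 1)) :
    f x ∈ cell A p (i + 1) (j + 1) ⊔ cell A p i j := by
  obtain ⟨b, rfl, hb⟩ := hx
  by_contra hcon
  have hbne : b ≠ 0 := by
    rintro rfl
    exact hcon (by rw [smul_zero, map_zero]; exact AddSubgroup.zero_mem _)
  set k := min (i + (j + 1)) E with hk
  have hk1 : 1 ≤ k := le_min (by omega) hE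
  have hkij : k ≤ i + (j + 1) := min_le_left _ _
  have hkE : k ≤ E := min_le_right _ _
  have hkb : p ^ k • b = 0 := tors hn hbound hp hpE' hb
  have hpkne : (p : ℕ) ^ k ≠ 0 := pow_ne_zero _ hp.pos.ne'
  haveI : NeZero (p ^ k) := ⟨hpkne⟩
  -- the p^E-torsion subgroup B
  set B : AddSubgroup A :=
    { carrier := {y | p ^ E • y = 0}
      zero_mem' := smul_zero _
      add_mem' := by
        intro a b ha hb
        show p ^ E • (a + b) = 0
        rw [smul_add, ha, hb, add_zero]
      neg_mem' := by
        intro a ha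
        show p ^ E • (-a) = 0
        rw [smul_neg, ha, neg_zero] } with hBdef
  have hpEb : p ^ E • b = 0 := by
    rw [show E = (E - k) + k by omega, pow_add, mul_smul, hkb, smul_zero]
  have hcmem : f b ∈ B := by
    show p ^ E • f b = 0
    rw [← map_nsmul, hpEb, map_zero]
  set c : B := ⟨f b, hcmem⟩ with hcdef
  set S : AddSubgroup B :=
    { carrier := {y : B | ∃ z : B, p ^ k • z = y}
      zero_mem' := ⟨0, smul_zero _⟩
      add_mem' := by
        rintro a b ⟨za, rfl⟩ ⟨zb, rfl⟩
        exact ⟨za + zb, by rw [smul_add]⟩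
      neg_mem' := by
        rintro a ⟨za, rfl⟩
        exact ⟨-za, by rw [smul_neg]⟩ } with hSdef
  set Q := B ⧸ S with hQdef
  set cbar : Q := QuotientAddGroup.mk c with hcbar
  have hQ : ∀ q : Q, p ^ k • q = 0 := by
    intro q
    refine QuotientAddGroup.induction_on q ?_
    intro y
    rw [← QuotientAddGroup.mk_nsmul]
    exact (QuotientAddGroup.eq_zero_iff _).mpr ⟨y, rfl⟩
  have hord : ∀ d : ℕ, d • cbar = 0 → p ^ k ∣ d := by
    intro d hd
    obtain ⟨s, hs, hds⟩ := (Nat.dvd_prime_pow hp).mp (Nat.gcd_dvd_right d (p ^ k))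
    have hgc : Nat.gcd d (p ^ k) • cbar = 0 := gcd_smul_zero hd (hQ cbar)
    rcases eq_or_ne s k with rfl | hsk
    · exact hds ▸ Nat.gcd_dvd_left d (p ^ k)
    exfalso
    have hs1 : s ≤ k - 1 := by omega
    rw [hds] at hgc
    have h1 : p ^ (k - 1) • cbar = 0 := by
      rw [show k - 1 = (k - 1 - s) + s by omega, pow_add, mul_smul, hgc, smul_zero]
    have h2 : p ^ (k - 1) • c ∈ S := by
      apply (QuotientAddGroup.eq_zero_iff _).mp
      rw [QuotientAddGroup.mk_nsmul]
      exact h1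
    obtain ⟨zb, hzb⟩ := h2
    have hzA : p ^ k • (zb : A) = p ^ (k - 1) • (f b) := by
      have := congrArg (Subtype.val) hzb
      simpa using this
    have hzk1 : p ^ (k + 1) • (zb : A) = 0 := by
      have e0 : p ^ (k + 1) • (zb : A) = p • (p ^ k • (zb : A)) := by
        rw [← mul_smul, ← pow_succ']
      have ekk : k - 1 + 1 = k := by omega
      rw [e0, hzA, ← mul_smul, ← pow_succ', ekk, ← map_nsmul, hkb, map_zero]
    have hzA' : p ^ (k - 1) • (p • (zb : A)) = p ^ (k - 1) • f b := by
      have ekk : k - 1 + 1 = k := by omega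
      rw [← mul_smul, ← pow_succ, ekk, hzA]
    have hy : p ^ (i + j) • ((f b) - p • (zb : A)) = 0 := by
      have w1 : p ^ (i + j) • (f b) = p ^ (i + j - (k - 1)) • (p ^ (k - 1) • f b) := by
        rw [← mul_smul, ← pow_add, show i + j - (k - 1) + (k - 1) = i + j by omega]
      have w2 : p ^ (i + j - (k - 1)) • (p ^ (k - 1) • (p • (zb : A))) =
          p ^ (i + j) • (p • (zb : A)) := by
        rw [← mul_smul, ← pow_add, show i + j - (k - 1) + (k - 1) = i + j by omega]
      rw [smul_sub, w1, ← w2, hzA', sub_self]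
    have m1 : p ^ i • ((f b) - p • (zb : A)) ∈ cell A p i j := ⟨_, rfl, hy⟩
    have m2 : p ^ (i + 1) • (zb : A) ∈ cell A p (i + 1) (j + 1) := by
      refine ⟨zb, rfl, ?_⟩
      rw [show (i + 1) + (j + 1) = (i + j + 2 - (k + 1)) + (k + 1) by omega, pow_add, mul_smul,
        hzk1, smul_zero]
    apply hcon
    have hdecomp : f (p ^ i • b) = p ^ (i + 1) • (zb : A) + p ^ i • ((f b) - p • (zb : A)) := by
      rw [map_nsmul, smul_sub, ← mul_smul, ← pow_succ]
      abel
    rw [hdecomp]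
    exact AddSubgroup.add_mem _ (AddSubgroup.mem_sup_left m2) (AddSubgroup.mem_sup_right m1)
  letI : Module (ZMod (p ^ k)) Q := AddCommGroup.zmodModule hQ
  obtain ⟨π, hπ⟩ := exists_zmod_hom (p ^ k) cbar hord
  -- the retraction ρ : A → B
  have hEfact : E = n.factorization p := by
    have h1 : E ≤ n.factorization p := (hp.pow_dvd_iff_le_factorization hn).mp hpE
    have h2 : ¬(E + 1 ≤ n.factorization p) := fun h =>
      hpE' ((hp.pow_dvd_iff_le_factorization hn).mpr h)
    omega
  set t : ℕ := n / p ^ E with htdef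
  have hco : Nat.Coprime (p ^ E) t := by
    rw [htdef, hEfact]
    exact (Nat.coprime_ordCompl hp hn).pow_left _
  obtain ⟨u, v, huv⟩ := Nat.isCoprime_iff_coprime.mpr hco
  have hEt : (p : ℕ) ^ E * t = n := Nat.mul_div_cancel' hpE
  set ρ₀ : A →+ A := AddMonoidHom.mk' (fun y => (v * (t : ℤ)) • y)
    (fun a b => smul_add _ a b) with hρ₀
  have hρ1 : ∀ y : A, p ^ E • (ρ₀ y) = 0 := by
    intro y
    show p ^ E • ((v * (t : ℤ)) • y) = 0
    rw [← natCast_zsmul ((v * (t : ℤ)) • y) (p ^ E), ← mul_smul]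
    have h : ((p ^ E : ℕ) : ℤ) * (v * (t : ℤ)) = v * (n : ℤ) := by
      push_cast [← hEt]; ring
    rw [h, mul_smul, natCast_zsmul, hbound, smul_zero]
  have hρ2 : ∀ y : A, p ^ E • y = 0 → ρ₀ y = y := by
    intro y hy
    show (v * (t : ℤ)) • y = y
    have h1 : (v * (t : ℤ)) • y - y = (v * (t : ℤ) - 1) • y := by rw [sub_smul, one_smul]
    have h2 : v * (t : ℤ) - 1 = -(u * ((p ^ E : ℕ) : ℤ)) := by linear_combination huv
    have h3 : (v * (t : ℤ) - 1) • y = 0 := by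
      rw [h2, neg_smul, mul_smul, natCast_zsmul, hy, smul_zero, neg_zero]
    have h4 : (v * (t : ℤ)) • y - y = 0 := by rw [h1, h3]
    exact sub_eq_zero.mp h4
  set ρB : A →+ B := AddMonoidHom.codRestrict ρ₀ B hρ1 with hρB
  set lf : ZMod (p ^ k) →+ A := ZMod.lift (p ^ k) ⟨zmultiplesHom A b, by
    show ((p ^ k : ℕ) : ℤ) • b = 0
    rw [natCast_zsmul, hkb]⟩ with hlf
  set g : AddMonoid.End A := lf.comp (π.comp ((QuotientAddGroup.mk' S).comp ρB)) with hg
  have hgfb : g (f b) = b := by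
    have h1 : ρB (f b) = c := Subtype.ext (hρ2 _ hcmem)
    show lf (π ((QuotientAddGroup.mk' S) (ρB (f b)))) = b
    rw [h1]
    have h2 : (QuotientAddGroup.mk' S) c = cbar := rfl
    rw [h2, hπ]
    have h3 : ((1 : ℤ) : ZMod (p ^ k)) = 1 := Int.cast_one
    rw [← h3, hlf, ZMod.lift_coe]
    exact one_zsmul b
  exact hbne (eq_zero_of_fixed hf g hgfb)

lemma cell_kill (hn : n ≠ 0) (hbound : ∀ a : A, n • a = 0) (hp : p.Prime) (hE : 1 ≤ E)
    (hpE : p ^ E ∣ n) (hpE' : ¬ p ^ (E + 1) ∣ n) :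
    ∀ s i j : ℕ, (E - i) + j = s → ∀ l : List (AddMonoid.End A),
      (∀ f ∈ l, f ∈ (⊥ : Ideal (AddMonoid.End A)).jacobson) → l.length = s →
      ∀ x ∈ cell A p i j, l.prod x = 0 := by
  intro s
  induction s with
  | zero =>
    intro i j hij l _ hlen x hx
    obtain rfl : l = [] := List.length_eq_zero_iff.mp hlen
    obtain ⟨b, rfl, hb⟩ := hx
    have hj : j = 0 := by omega
    subst hj
    have h0 : p ^ i • b = 0 := by simpa using hb
    rw [h0]
    simp
  | succ s IH =>
    intro i j hij l hl hlen x hx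
    rcases Nat.eq_zero_or_pos j with rfl | hj
    · obtain ⟨b, rfl, hb⟩ := hx
      have h0 : p ^ i • b = 0 := by simpa using hb
      rw [h0, map_zero]
    rcases le_or_gt E i with hEi | hiE
    · obtain ⟨b, rfl, hb⟩ := hx
      have h1 := tors hn hbound hp hpE' hb
      have h0 : p ^ i • b = 0 := by
        rw [show i = (i - min (i + j) E) + min (i + j) E by omega, pow_add, mul_smul, h1,
          smul_zero]
      rw [h0, map_zero]
    obtain rfl | ⟨L, f, rfl⟩ := l.eq_nil_or_concat
    · simp at hlen
    have hlenL : L.length = s := by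
      have h := hlen
      rw [List.length_concat] at h
      omega
    have hfJ : f ∈ (⊥ : Ideal (AddMonoid.End A)).jacobson :=
      hl f (by simp [List.concat_eq_append])
    have hLJ : ∀ h ∈ L, h ∈ (⊥ : Ideal (AddMonoid.End A)).jacobson := fun h hh =>
      hl h (by simp [List.concat_eq_append, hh])
    obtain ⟨j', rfl⟩ : ∃ j', j = j' + 1 := ⟨j - 1, by omega⟩
    have hfx := keystep hn hbound hp hE hpE hpE' hfJ i j' hx
    rw [List.prod_concat]
    obtain ⟨y, hy, z, hz, hyz⟩ := AddSubgroup.mem_sup.mp hfx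
    have happ : (L.prod * f) x = L.prod (f x) := rfl
    rw [happ, ← hyz, map_add, IH (i + 1) (j' + 1) (by omega) L hLJ hlenL y hy,
      IH i j' (by omega) L hLJ hlenL z hz, add_zero]

lemma prime_kill (hn : n ≠ 0) (hbound : ∀ a : A, n • a = 0) (hp : p.Prime) (hE : 1 ≤ E)
    (hpE : p ^ E ∣ n) (hpE' : ¬ p ^ (E + 1) ∣ n)
    (l : List (AddMonoid.End A)) (hl : ∀ f ∈ l, f ∈ (⊥ : Ideal (AddMonoid.End A)).jacobson)
    (hlen : 2 * E ≤ l.length) {x : A} (hx : p ^ E • x = 0) : l.prod x = 0 := by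
  set l₁ := l.take (l.length - 2 * E) with h1
  set l₂ := l.drop (l.length - 2 * E) with h2
  have hsp : l₁.prod * l₂.prod = l.prod := by
    rw [← List.prod_append, List.take_append_drop]
  have hlen2 : l₂.length = 2 * E := by rw [h2, List.length_drop]; omega
  have hl₂ : ∀ f ∈ l₂, f ∈ (⊥ : Ideal (AddMonoid.End A)).jacobson := fun f hf =>
    hl f (List.mem_of_mem_drop hf)
  have hx2 : x ∈ cell A p 0 E := ⟨x, by simp, by simpa using hx⟩
  have hz := cell_kill hn hbound hp hE hpE hpE' (2 * E) 0 E (by omega) l₂ hl₂ hlen2 x hx2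
  rw [← hsp]
  show l₁.prod (l₂.prod x) = 0
  rw [hz, map_zero]

end Cells

end JNB

theorem jacobson_nilpotent_of_bounded {A : Type*} [AddCommGroup A]
    (n : ℕ) (hn : 0 < n) (hbound : ∀ a : A, n • a = 0) :
    ∃ N : ℕ, 0 < N ∧ ∀ l : List (AddMonoid.End A), l.length = N →
      (∀ f ∈ l, f ∈ (⊥ : Ideal (AddMonoid.End A)).jacobson) → l.prod = 0 := by
  classical
  have hn' : n ≠ 0 := hn.ne'
  refine ⟨2 * n, by omega, ?_⟩
  intro l hlen hl
  have key : ∀ m : ℕ, m ∣ n → ∀ x : A, m • x = 0 → l.prod x = 0 := by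
    intro m
    induction m using Nat.strong_induction_on with
    | _ m IH =>
    intro hmn x hx
    rcases eq_or_ne m 0 with rfl | hm0
    · exact absurd (zero_dvd_iff.mp hmn) hn'
    rcases eq_or_ne m 1 with rfl | hm1
    · have hx0 : x = 0 := by simpa using hx
      rw [hx0, map_zero]
    set p := m.minFac with hpdef
    have hp : p.Prime := Nat.minFac_prime hm1
    have hpm : p ∣ m := Nat.minFac_dvd m
    set E' := m.factorization p with hE'def
    set m' := m / p ^ E' with hm'def
    have hE'1 : 1 ≤ E' := hp.factorization_pos_of_dvd hm0 hpm
    have hsplit : p ^ E' * m' = m := Nat.ordProj_mul_ordCompl_eq_self m p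
    have hco : Nat.Coprime (p ^ E') m' := (Nat.coprime_ordCompl hp hm0).pow_left _
    obtain ⟨u, v, huv⟩ := Nat.isCoprime_iff_coprime.mpr hco
    have hE'E : E' ≤ n.factorization p :=
      (hp.pow_dvd_iff_le_factorization hn').mp (dvd_trans (Nat.ordProj_dvd m p) hmn)
    have hxsplit : x = (u * ((p ^ E' : ℕ) : ℤ)) • x + (v * ((m' : ℕ) : ℤ)) • x := by
      rw [← add_smul, huv, one_smul]
    set y := (u * ((p ^ E' : ℕ) : ℤ)) • x with hy
    set z := (v * ((m' : ℕ) : ℤ)) • x with hz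
    have hym : m' • y = 0 := by
      rw [hy, ← natCast_zsmul ((u * ((p ^ E' : ℕ) : ℤ)) • x) m', ← mul_smul]
      have hco2 : ((m' : ℕ) : ℤ) * (u * ((p ^ E' : ℕ) : ℤ)) = u * (m : ℤ) := by
        push_cast [← hsplit]; ring
      rw [hco2, mul_smul, natCast_zsmul, hx, smul_zero]
    have hzm : (p : ℕ) ^ (n.factorization p) • z = 0 := by
      have hz1 : (p : ℕ) ^ E' • z = 0 := by
        rw [hz, ← natCast_zsmul ((v * ((m' : ℕ) : ℤ)) • x) (p ^ E'), ← mul_smul]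
        have hco3 : ((p ^ E' : ℕ) : ℤ) * (v * ((m' : ℕ) : ℤ)) = v * (m : ℤ) := by
          push_cast [← hsplit]; ring
        rw [hco3, mul_smul, natCast_zsmul, hx, smul_zero]
      rw [show n.factorization p = (n.factorization p - E') + E' by omega, pow_add,
        mul_smul, hz1, smul_zero]
    have hm'm : m' < m := by
      apply Nat.div_lt_self (Nat.pos_of_ne_zero hm0)
      exact Nat.one_lt_pow (by omega) hp.one_lt
    have hm'n : m' ∣ n := dvd_trans (Nat.ordCompl_dvd m p) hmn
    have hy0 : l.prod y = 0 := IH m' hm'm hm'n y hym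
    have hz0 : l.prod z = 0 := by
      set E := n.factorization p with hEdef
      have hE1 : 1 ≤ E := le_trans hE'1 hE'E
      have hpE : p ^ E ∣ n := Nat.ordProj_dvd n p
      have hpE2 : ¬ p ^ (E + 1) ∣ n := Nat.pow_succ_factorization_not_dvd hn' hp
      have hEn : E ≤ n := by
        have ha : p ^ E ≤ n := Nat.le_of_dvd hn hpE
        have hb : E < p ^ E := Nat.lt_pow_self hp.one_lt
        omega
      exact JNB.prime_kill hn' hbound hp hE1 hpE hpE2 l hl (by omega) hzm
    calc l.prod x = l.prod (y + z) := by rw [← hxsplit]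
      _ = l.prod y + l.prod z := map_add _ _ _
      _ = 0 := by rw [hy0, hz0, add_zero]
  refine DFunLike.ext _ _ fun x => ?_
  rw [key n dvd_rfl x (hbound x)]
  rfl
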